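/- Let b be a nonnegative integer and k ≥ 5 an integer with b ≤ k. For any complex z with |z| ≤ 1 and Re(z) ≤ 0, the shifted truncated exponential series T_{b,k}(z) = ∑_{j=b}^k (b!/j!) z^{j-b} satisfies |T_{b,k}(z)| ≤ √1.04. -/

import Mathlib

set_option maxHeartbeats 1000000

private lemma keyR (a c d x y : ℝ) (ha : 0 ≤ a) (hc : 0 ≤ c) (hd : 0 ≤ d)
    (h1 : a^2 + c^2 + d^2 ≤ 2*c)
    (h2 : a^2 + 2*c + c^2 + d^2 + 2*a*d + 6*d ≤ 2*a)
    (hx : x ≤ 0) (hr : x^2 + y^2 ≤ 1) :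
    (1 + a*x + c*(x^2-y^2) + d*(x^3-3*x*y^2))^2 + (a*y + 2*c*x*y + d*(3*x^2*y - y^3))^2 ≤ 1 := by
  set r2 := x^2 + y^2 with hr2
  have hr0 : 0 ≤ r2 := by positivity
  have hnx : 0 ≤ -x := by linarith
  have hy : y^2 ≤ 1 := by nlinarith [sq_nonneg x]
  have hx2 : x^2 ≤ 1 := by nlinarith [sq_nonneg y]
  have hu1 : -x ≤ 1 := by nlinarith
  have e1 : (1 + a*x + c*(x^2-y^2) + d*(x^3-3*x*y^2))^2 + (a*y + 2*c*x*y + d*(3*x^2*y - y^3))^2 - 1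
      = (2*a*x - 6*d*x*y^2) + 2*d*x^3 + 2*a*c*x*r2 + 2*c*d*x*r2^2
        + (a^2*r2 + c^2*r2^2 + d^2*r2^3) + 2*c*(x^2-y^2) + 2*a*d*r2*(x^2-y^2) := by
    rw [hr2]; ring
  have p1 : 2*a*x - 6*d*x*y^2 ≤ 2*a*x - 6*d*x := by
    have := mul_nonneg (mul_nonneg hd hnx) (by linarith : (0:ℝ) ≤ 1 - y^2)
    nlinarith [this]
  have p2 : 2*d*x^3 ≤ 0 := by
    have := mul_nonneg hd (mul_nonneg hnx (sq_nonneg x))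
    nlinarith [this]
  have p3 : 2*a*c*x*r2 ≤ 0 := by
    have := mul_nonneg (mul_nonneg (mul_nonneg ha hc) hnx) hr0
    nlinarith [this]
  have p4 : 2*c*d*x*r2^2 ≤ 0 := by
    have := mul_nonneg (mul_nonneg (mul_nonneg hc hd) hnx) (sq_nonneg r2)
    nlinarith [this]
  have p5 : a^2*r2 + c^2*r2^2 + d^2*r2^3 ≤ (a^2+c^2+d^2)*r2 := by
    have h22 : r2^2 ≤ r2 := by nlinarith
    have h33 : r2^3 ≤ r2 := by nlinarith
    nlinarith [sq_nonneg a, sq_nonneg c, sq_nonneg d, mul_le_mul_of_nonneg_left h22 (sq_nonneg c),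
      mul_le_mul_of_nonneg_left h33 (sq_nonneg d)]
  have p6 : 2*a*d*r2*(x^2-y^2) ≤ 2*a*d*x^2 := by
    have h1' : 2*a*d*r2*(x^2-y^2) ≤ 2*a*d*r2*x^2 := by
      have := mul_nonneg (mul_nonneg (mul_nonneg ha hd) hr0) (sq_nonneg y)
      nlinarith [this]
    have h2' : 2*a*d*r2*x^2 ≤ 2*a*d*x^2 := by
      have := mul_nonneg (mul_nonneg (mul_nonneg ha hd) (sq_nonneg x)) (by linarith : (0:ℝ) ≤ 1 - r2)
      nlinarith [this]
    linarith
  have final : (2*a*x - 6*d*x) + (a^2+c^2+d^2)*r2 + 2*c*(x^2-y^2) + 2*a*d*x^2 ≤ 0 := by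
    have hxu : x^2 ≤ -x := by nlinarith
    have q1 : (a^2+c^2+d^2)*y^2 - 2*c*y^2 ≤ 0 := by
      have := mul_nonneg (sq_nonneg y) (by linarith : (0:ℝ) ≤ 2*c - (a^2+c^2+d^2))
      nlinarith [this]
    have q2 : (a^2+c^2+d^2+2*c+2*a*d)*x^2 ≤ (a^2+c^2+d^2+2*c+2*a*d)*(-x) := by
      have hco : 0 ≤ a^2+c^2+d^2+2*c+2*a*d := by positivity
      exact mul_le_mul_of_nonneg_left hxu hco
    have q3 : (a^2+c^2+d^2+2*c+2*a*d)*(-x) + 2*a*x - 6*d*x ≤ 0 := by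
      have := mul_nonneg hnx (by linarith : (0:ℝ) ≤ 2*a - (a^2+c^2+d^2+2*c+2*a*d+6*d))
      nlinarith [this]
    nlinarith [q1, q2, q3]
  linarith [p1, p2, p3, p4, p5, p6, final, e1.le, e1.ge]

private lemma keyC (a c d : ℝ) (ha : 0 ≤ a) (hc : 0 ≤ c) (hd : 0 ≤ d)
    (h1 : a^2 + c^2 + d^2 ≤ 2*c)
    (h2 : a^2 + 2*c + c^2 + d^2 + 2*a*d + 6*d ≤ 2*a)
    (z : ℂ) (hz : norm z ≤ 1) (hre : z.re ≤ 0) :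
    norm (1 + a*z + c*z^2 + d*z^3) ≤ 1 := by
  set x := z.re
  set y := z.im
  have hr : x^2 + y^2 ≤ 1 := by
    have := Complex.sq_norm z
    rw [Complex.normSq_apply] at this
    nlinarith [norm_nonneg z]
  have hPre : ((1:ℂ) + a*z + c*z^2 + d*z^3).re = 1 + a*x + c*(x^2-y^2) + d*(x^3-3*x*y^2) := by
    simp only [pow_succ, pow_zero, one_mul, Complex.add_re, Complex.add_im, Complex.mul_re,
      Complex.mul_im, Complex.one_re, Complex.one_im, Complex.ofReal_re, Complex.ofReal_im]
    ring
  have hPim : ((1:ℂ) + a*z + c*z^2 + d*z^3).im = a*y + 2*c*x*y + d*(3*x^2*y - y^3) := by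
    simp only [pow_succ, pow_zero, one_mul, Complex.add_re, Complex.add_im, Complex.mul_re,
      Complex.mul_im, Complex.one_re, Complex.one_im, Complex.ofReal_re, Complex.ofReal_im]
    ring
  have hkey := keyR a c d x y ha hc hd h1 h2 hre hr
  have : norm ((1:ℂ) + a*z + c*z^2 + d*z^3) ^ 2 ≤ 1 := by
    rw [Complex.sq_norm, Complex.normSq_apply, hPre, hPim]
    convert hkey using 2 <;> ring
  nlinarith [norm_nonneg ((1:ℂ) + a*z + c*z^2 + d*z^3)]

-- facts about the coefficients a = 1/(B+1), c = 1/((B+1)(B+2)), d = 1/((B+1)(B+2)(B+3))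
private lemma coeff_facts (B : ℝ) (hB : 1 ≤ B) :
    0 ≤ 1/(B+1) ∧ 0 ≤ 1/((B+1)*(B+2)) ∧ 0 ≤ 1/((B+1)*(B+2)*(B+3)) ∧
      (1/(B+1))^2 + (1/((B+1)*(B+2)))^2 + (1/((B+1)*(B+2)*(B+3)))^2 ≤ 2*(1/((B+1)*(B+2))) ∧
      (1/(B+1))^2 + 2*(1/((B+1)*(B+2))) + (1/((B+1)*(B+2)))^2 + (1/((B+1)*(B+2)*(B+3)))^2
        + 2*(1/(B+1))*(1/((B+1)*(B+2)*(B+3))) + 6*(1/((B+1)*(B+2)*(B+3))) ≤ 2*(1/(B+1)) := by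
  set a := 1/(B+1) with hadef
  set c := 1/((B+1)*(B+2)) with hcdef
  set d := 1/((B+1)*(B+2)*(B+3)) with hddef
  have h1p : (0:ℝ) < B + 1 := by linarith
  have h2p : (0:ℝ) < B + 2 := by linarith
  have h3p : (0:ℝ) < B + 3 := by linarith
  have ha0 : 0 < a := by rw [hadef]; positivity
  have hc0 : 0 < c := by rw [hcdef]; positivity
  have hd0 : 0 < d := by rw [hddef]; positivity
  have ea : a * (B+1) = 1 := by rw [hadef]; field_simp
  have eac : a = c * (B+2) := by rw [hadef, hcdef]; field_simp
  have ecd : c = d * (B+3) := by rw [hcdef, hddef]; field_simp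
  have easq : a^2 * (B+1) = c * (B+2) := by rw [hadef, hcdef]; field_simp
  have ha2 : a ≤ 1/2 := by nlinarith
  have hc3 : c ≤ a/3 := by nlinarith
  have hd4 : d ≤ c/4 := by nlinarith
  have hc6 : c ≤ 1/6 := by nlinarith
  have hd24 : d ≤ 1/24 := by nlinarith
  have hasq : a^2 ≤ (3/2)*c := by nlinarith
  have hcsq : c^2 ≤ c/6 := by nlinarith
  have hdsq : d^2 ≤ d/24 := by nlinarith
  have had : 2*a*d ≤ d := by nlinarith
  refine ⟨ha0.le, hc0.le, hd0.le, by nlinarith, by nlinarith⟩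

private lemma fact_ratio_le (b : ℕ) (hb : 1 ≤ b) :
    ∀ m, 4 ≤ m → ((b.factorial : ℝ)/((b+m).factorial)) ≤ (1/120)*(1/2)^(m-4) := by
  intro m hm
  induction m, hm using Nat.le_induction with
  | base =>
    have hfac : (b+4).factorial = (b+4)*((b+3)*((b+2)*((b+1)*b.factorial))) := by
      simp [show b+4 = (b+3)+1 from rfl, show b+3 = (b+2)+1 from rfl,
        show b+2 = (b+1)+1 from rfl, Nat.factorial_succ]
    have h120 : 120 * b.factorial ≤ (b+4).factorial := by
      rw [hfac]
      calc 120 * b.factorial = 5*(4*(3*(2*b.factorial))) := by ring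
      _ ≤ (b+4)*((b+3)*((b+2)*((b+1)*b.factorial))) := by
          gcongr <;> omega
    have hpos : (0:ℝ) < ((b+4).factorial : ℝ) := by positivity
    rw [div_le_iff₀ hpos]
    simp only [Nat.sub_self, pow_zero, mul_one]
    rw [show (1:ℝ)/120 * ((b+4).factorial:ℝ) = ((b+4).factorial:ℝ)/120 by ring,
      le_div_iff₀ (by norm_num : (0:ℝ) < 120)]
    calc (b.factorial:ℝ) * 120 = ((120 * b.factorial : ℕ) : ℝ) := by push_cast; ring
    _ ≤ ((b+4).factorial : ℝ) := by exact_mod_cast h120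
  | succ m hm ih =>
    have hfac : ((b+(m+1)).factorial : ℝ) = ((b+m+1 : ℕ) : ℝ) * ((b+m).factorial : ℝ) := by
      rw [show b+(m+1) = (b+m)+1 from rfl, Nat.factorial_succ]; push_cast; ring
    have hpos : (0:ℝ) < ((b+m).factorial : ℝ) := by positivity
    have h2 : (2:ℝ) ≤ ((b+m+1:ℕ) : ℝ) := by exact_mod_cast (by omega : 2 ≤ b+m+1)
    have step : ((b.factorial : ℝ)/((b+(m+1)).factorial))
        ≤ ((b.factorial : ℝ)/((b+m).factorial)) / 2 := by
      rw [hfac, mul_comm, ← div_div]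
      apply div_le_div_of_nonneg_left _ (by norm_num) h2
      · positivity
    have hms : m+1-4 = (m-4)+1 := by omega
    calc ((b.factorial : ℝ)/((b+(m+1)).factorial))
        ≤ ((b.factorial : ℝ)/((b+m).factorial)) / 2 := step
    _ ≤ ((1/120)*(1/2)^(m-4)) / 2 := by linarith
    _ = (1/120)*(1/2)^(m+1-4) := by rw [hms]; ring

private lemma keyC1 (a : ℝ) (ha : 0 ≤ a) (ha5 : a ≤ 1/5)
    (z : ℂ) (hz : norm z ≤ 1) (hre : z.re ≤ 0) :
    norm (1 + (a:ℂ)*z) ≤ Real.sqrt 1.04 := by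
  set x := z.re
  set y := z.im
  have hr : x^2 + y^2 ≤ 1 := by
    have := Complex.sq_norm z
    rw [Complex.normSq_apply] at this
    nlinarith [norm_nonneg z]
  have hPre : ((1:ℂ) + a*z).re = 1 + a*x := by
    simp [Complex.add_re, Complex.mul_re, Complex.ofReal_re, Complex.ofReal_im]
    left; rfl
  have hPim : ((1:ℂ) + a*z).im = a*y := by
    simp [Complex.add_im, Complex.mul_im, Complex.ofReal_re, Complex.ofReal_im]
    left; rfl
  rw [Real.le_sqrt (norm_nonneg _) (by norm_num)]
  rw [Complex.sq_norm, Complex.normSq_apply, hPre, hPim]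
  have hax : a*x ≤ 0 := mul_nonpos_of_nonneg_of_nonpos ha hre
  have haa : a^2*(x^2+y^2) ≤ a^2 := by nlinarith [sq_nonneg a]
  nlinarith [hax, haa]

private lemma abs_le_sqrt104 (w : ℂ) (h : norm w ≤ 61/60) :
    norm w ≤ Real.sqrt 1.04 := by
  refine le_trans h ?_
  rw [Real.le_sqrt (by norm_num) (by norm_num)]
  norm_num

open Finset in
theorem shifted_taylor_trunc_bound (b k : ℕ) (hk : 5 ≤ k) (hb : b ≤ k) (z : ℂ)
    (hz : norm z ≤ 1) (hre : z.re ≤ 0) :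
    norm (∑ j ∈ Finset.Icc b k,
        (Nat.factorial b : ℂ) * z ^ (j - b) / (Nat.factorial j : ℂ)) ≤
      Real.sqrt 1.04 := by
  rw [← Finset.Ico_add_one_right_eq_Icc, Finset.sum_Ico_eq_sum_range]
  simp only [Nat.add_sub_cancel_left]
  obtain rfl | hb1 : b = 0 ∨ 1 ≤ b := by omega
  · -- b = 0 : use the exponential bound
    simp only [Nat.zero_add, Nat.sub_zero, Nat.factorial_zero, Nat.cast_one, one_mul,
      Nat.cast_ofNat, zero_add]
    set S := ∑ x ∈ Finset.range (k+1), z ^ x / ((x.factorial : ℂ)) with hS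
    have hE := Complex.exp_bound hz (n := k+1) (by omega)
    have hexp : norm (Complex.exp z) ≤ 1 := by
      rw [Complex.norm_exp]; exact Real.exp_le_one_iff.mpr hre
    have hz1 : norm z ^ (k+1) ≤ 1 := pow_le_one₀ (norm_nonneg z) hz
    have h720 : (720:ℝ) ≤ ((k+1).factorial : ℝ) := by
      have : (720 : ℕ) ≤ (k+1).factorial := by
        calc (720:ℕ) = (6:ℕ).factorial := by norm_num [Nat.factorial]
        _ ≤ (k+1).factorial := Nat.factorial_le (by omega)
      exact_mod_cast this
    have hk5 : (5:ℝ) ≤ (k:ℝ) := by exact_mod_cast hk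
    have hcoef : ((k+1).succ : ℝ) * (((k+1).factorial :ℝ) * (((k+1):ℕ):ℝ))⁻¹ ≤ 1/360 := by
      rw [← div_eq_mul_inv, div_le_div_iff₀ (by positivity) (by norm_num)]
      push_cast
      nlinarith [h720, hk5]
    have hbound : norm (Complex.exp z - S) ≤ 1/360 := by
      calc norm (Complex.exp z - S) ≤
          norm z ^ (k+1) * (((k+1).succ : ℝ) * (((k+1).factorial :ℝ) * (((k+1):ℕ):ℝ))⁻¹) := by
            exact_mod_cast hE
      _ ≤ 1 * (1/360) := by
          apply mul_le_mul hz1 hcoef (by positivity) (by norm_num)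
      _ = 1/360 := by norm_num
    have tri : norm S ≤ norm (Complex.exp z) + norm (Complex.exp z - S) := by
      calc norm S = norm (Complex.exp z - (Complex.exp z - S)) := by ring_nf
      _ ≤ _ := norm_sub_le _ _
    apply abs_le_sqrt104
    calc norm S ≤ 1 + 1/360 := by linarith
    _ ≤ 61/60 := by norm_num
  · -- b ≥ 1
    have hN : k + 1 - b = (k - b) + 1 := by omega
    rw [hN]
    set N := k - b with hNdef
    have hBr : (1:ℝ) ≤ (b:ℝ) := by exact_mod_cast hb1
    obtain ⟨ha0, hc0, hd0, h1f, h2f⟩ := coeff_facts (b:ℝ) hBr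
    set a := 1/((b:ℝ)+1) with hadef
    set c := 1/(((b:ℝ)+1)*((b:ℝ)+2)) with hcdef
    set d := 1/(((b:ℝ)+1)*((b:ℝ)+2)*((b:ℝ)+3)) with hddef
    have fb0 : (b.factorial : ℂ) ≠ 0 := Nat.cast_ne_zero.mpr (Nat.factorial_ne_zero b)
    have cb1 : ((b:ℂ)+1) ≠ 0 := by
      have : (((b+1:ℕ)):ℂ) ≠ 0 := Nat.cast_ne_zero.mpr (by omega)
      push_cast at this; exact this
    have cb2 : ((b:ℂ)+2) ≠ 0 := by
      have : (((b+2:ℕ)):ℂ) ≠ 0 := Nat.cast_ne_zero.mpr (by omega)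
      push_cast at this; exact this
    have cb3 : ((b:ℂ)+3) ≠ 0 := by
      have : (((b+3:ℕ)):ℂ) ≠ 0 := Nat.cast_ne_zero.mpr (by omega)
      push_cast at this; exact this
    have f1 : (((b+1).factorial : ℕ) : ℂ) = ((b:ℂ)+1) * (b.factorial : ℂ) := by
      rw [Nat.factorial_succ]; push_cast; ring
    have f2 : (((b+2).factorial : ℕ) : ℂ) = ((b:ℂ)+2) * (((b:ℂ)+1) * (b.factorial : ℂ)) := by
      rw [show b+2 = (b+1)+1 from rfl, Nat.factorial_succ, Nat.factorial_succ]; push_cast; ring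
    have f3 : (((b+3).factorial : ℕ) : ℂ) = ((b:ℂ)+3) * (((b:ℂ)+2) * (((b:ℂ)+1) * (b.factorial : ℂ))) := by
      rw [show b+3 = ((b+1)+1)+1 from rfl, Nat.factorial_succ, Nat.factorial_succ,
        Nat.factorial_succ]
      push_cast; ring
    have t0 : (b.factorial:ℂ) * z^0 / (((b+0).factorial : ℕ):ℂ) = 1 := by
      simp [Nat.add_zero, div_self fb0]
    have t1 : (b.factorial:ℂ) * z^1 / (((b+1).factorial : ℕ):ℂ) = ((a:ℝ):ℂ) * z := by
      rw [f1, hadef]; push_cast; field_simp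
    have t2 : (b.factorial:ℂ) * z^2 / (((b+2).factorial : ℕ):ℂ) = ((c:ℝ):ℂ) * z^2 := by
      rw [f2, hcdef]; push_cast; field_simp
    have t3 : (b.factorial:ℂ) * z^3 / (((b+3).factorial : ℕ):ℂ) = ((d:ℝ):ℂ) * z^3 := by
      rw [f3, hddef]; push_cast; field_simp
    obtain h0 | h1 | h2 | h3 : N = 0 ∨ N = 1 ∨ N = 2 ∨ 3 ≤ N := by omega
    · -- N = 0
      rw [h0, Finset.sum_range_one, t0]
      apply abs_le_sqrt104
      simp; norm_num
    · -- N = 1 : b = k - 1 ≥ 4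
      rw [h1, Finset.sum_range_succ, Finset.sum_range_one, t0, t1]
      have hb4 : 4 ≤ b := by omega
      have ha5 : a ≤ 1/5 := by
        rw [hadef]
        have h5 : (5:ℝ) ≤ (b:ℝ)+1 := by
          have : (4:ℝ) ≤ (b:ℝ) := by exact_mod_cast hb4
          linarith
        rw [div_le_div_iff₀ (by linarith) (by norm_num)]
        linarith
      exact keyC1 a ha0 ha5 z hz hre
    · -- N = 2
      rw [h2, Finset.sum_range_succ, Finset.sum_range_succ, Finset.sum_range_one, t0, t1, t2]
      have h1' : a^2 + c^2 + (0:ℝ)^2 ≤ 2*c := by nlinarith [sq_nonneg d]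
      have h2' : a^2 + 2*c + c^2 + (0:ℝ)^2 + 2*a*0 + 6*0 ≤ 2*a := by
        nlinarith [sq_nonneg d, mul_nonneg ha0 hd0, hd0]
      have := keyC a c 0 ha0 hc0 le_rfl h1' h2' z hz hre
      apply abs_le_sqrt104
      calc norm (1 + ((a:ℝ):ℂ)*z + ((c:ℝ):ℂ)*z^2) ≤ 1 := by
            simpa using this
      _ ≤ 61/60 := by norm_num
    · -- N ≥ 3
      rw [Finset.range_eq_Ico, ← Finset.sum_Ico_consecutive _ (by omega : 0 ≤ 4)
        (by omega : 4 ≤ N+1)]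
      apply abs_le_sqrt104
      calc norm _ ≤ norm (∑ i ∈ Finset.Ico 0 4, (b.factorial:ℂ) * z^i / (((b+i).factorial : ℕ):ℂ))
            + norm (∑ i ∈ Finset.Ico 4 (N+1), (b.factorial:ℂ) * z^i / (((b+i).factorial : ℕ):ℂ)) :=
          norm_add_le _ _
      _ ≤ 1 + 1/60 := by
          gcongr
          · -- head
            rw [show (4:ℕ) = 3+1 from rfl, ← Finset.range_eq_Ico]
            rw [Finset.sum_range_succ, Finset.sum_range_succ, Finset.sum_range_succ,
              Finset.sum_range_one, t0, t1, t2, t3]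
            exact keyC a c d ha0 hc0 hd0 h1f h2f z hz hre
          · -- tail
            calc norm (∑ i ∈ Finset.Ico 4 (N+1), (b.factorial:ℂ) * z^i / (((b+i).factorial : ℕ):ℂ))
                ≤ ∑ i ∈ Finset.Ico 4 (N+1), norm ((b.factorial:ℂ) * z^i / (((b+i).factorial : ℕ):ℂ)) :=
              norm_sum_le _ _
            _ ≤ ∑ i ∈ Finset.Ico 4 (N+1), (1/120)*(1/2:ℝ)^(i-4) := by
                apply Finset.sum_le_sum
                intro i hi
                have hi4 : 4 ≤ i := (Finset.mem_Ico.mp hi).1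
                have habs : norm ((b.factorial:ℂ) * z^i / (((b+i).factorial : ℕ):ℂ))
                    = (b.factorial:ℝ) * norm z ^ i / ((b+i).factorial : ℝ) := by
                  rw [norm_div, norm_mul, norm_pow, Complex.norm_natCast, Complex.norm_natCast]
                rw [habs]
                have hzi : norm z ^ i ≤ 1 := pow_le_one₀ (norm_nonneg z) hz
                calc (b.factorial:ℝ) * norm z ^ i / ((b+i).factorial : ℝ)
                    ≤ (b.factorial:ℝ) * 1 / ((b+i).factorial : ℝ) := by
                      gcongr
                _ = (b.factorial:ℝ) / ((b+i).factorial : ℝ) := by ring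
                _ ≤ (1/120)*(1/2:ℝ)^(i-4) := fact_ratio_le b hb1 i hi4
            _ = (1/120) * ∑ j ∈ Finset.range (N+1-4), (1/2:ℝ)^j := by
                rw [Finset.sum_Ico_eq_sum_range, ← Finset.mul_sum]
                congr 1
                apply Finset.sum_congr rfl
                intro j _
                congr 1
                omega
            _ ≤ (1/120) * 2 := by
                have := sum_geometric_two_le (N+1-4)
                linarith
            _ = 1/60 := by norm_num
      _ = 61/60 := by norm_num
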